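/- For every t ≥ 2 there is a constant c such that any t-ary tree with path length p ≥ 2 has at most p/(log_t p − c·log log p) nodes, for all sufficiently large p; in particular the number of nodes is at most (p/log_t p)(1+o(1)) as p → ∞. -/

import Mathlib

/-- A `t`-ary tree: either empty, or a root node with `t` ordered subtrees. -/
inductive TAry (t : ℕ) : Type where
  | nil : TAry t
  | node : (Fin t → TAry t) → TAry t

namespace TAry

variable {t : ℕ}

/-- Number of nodes of a `t`-ary tree. -/
def size : TAry t → ℕ
  | nil => 0
  | node c => 1 + ∑ i, (c i).size

/-- Sum over nodes of `d +` (depth of the node). -/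
def plFrom : TAry t → ℕ → ℕ
  | nil, _ => 0
  | node c, d => d + ∑ i, (c i).plFrom (d + 1)

/-- Path length: the sum of the depths of all nodes. -/
def pathLength (T : TAry t) : ℕ := T.plFrom 0

/-- Number of nodes at depth `j` (the profile `D_j`). -/
def depthCount : ℕ → TAry t → ℕ
  | _, nil => 0
  | 0, node _ => 1
  | j + 1, node c => ∑ i, depthCount j (c i)

/-- Number of leaves (nodes all of whose subtrees are empty). -/
def leaves : TAry t → ℕ
  | nil => 0
  | node c => max 1 (∑ i, (c i).leaves)

end TAry

namespace TAry
variable {t : ℕ}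

/-- Every internal (non-leaf) node has exactly one child. -/
def chain : TAry t → Prop
  | nil => True
  | node c => (∀ i, c i = nil) ∨ ∃ i, c i ≠ nil ∧ chain (c i) ∧ ∀ j, j ≠ i → c j = nil

/-- Number of leaves at depth `j`. -/
def leavesAt : ℕ → TAry t → ℕ
  | _, nil => 0
  | 0, node c => if (∑ i, (c i).size) = 0 then 1 else 0
  | j + 1, node c => ∑ i, leavesAt j (c i)

/-- The subtree of `T` at position `pos` (empty tree if the position is invalid). -/
def getAt : TAry t → List (Fin t) → TAry t
  | T, [] => T
  | nil, _ :: _ => nil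
  | node c, i :: rest => getAt (c i) rest

/-- Replace the subtree of `T` at position `pos` by `τ`. -/
def replaceAt : TAry t → List (Fin t) → TAry t → TAry t
  | _, [], τ => τ
  | nil, _ :: _, _ => nil
  | node c, i :: rest, τ => node (fun j => if j = i then replaceAt (c i) rest τ else c j)

/-- Attach the trees `τs i` at the positions `pos i`, for `i = 0, …, ℓ-1`. -/
def attachAll {ℓ : ℕ} (T : TAry t) (pos : Fin ℓ → List (Fin t)) (τs : Fin ℓ → TAry t) :
    TAry t :=
  (List.finRange ℓ).foldl (fun A i => replaceAt A (pos i) (τs i)) T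

end TAry

/-- The binary entropy function (natural logarithm). -/
noncomputable def binEnt (x : ℝ) : ℝ := -x * Real.log x - (1 - x) * Real.log (1 - x)

/-- Number of `t`-ary trees with exactly `n` nodes. -/
noncomputable def Ct (t n : ℕ) : ℕ := Nat.card {T : TAry t // T.size = n}

/-- Number of `t`-ary trees with path length exactly `p`. -/
noncomputable def Tt (t p : ℕ) : ℕ := Nat.card {T : TAry t // T.pathLength = p}


namespace TAry
variable {t : ℕ}

lemma plFrom_eq (T : TAry t) : ∀ d, T.plFrom d = T.pathLength + d * T.size := by
  induction T with
  | nil => intro d; simp [plFrom, pathLength, size]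
  | node c ih =>
    intro d
    simp only [plFrom, pathLength, size]
    rw [Finset.sum_congr rfl (fun i _ => ih i (d+1)),
        Finset.sum_congr rfl (fun i _ => ih i (0+1))]
    simp [Finset.sum_add_distrib, Finset.mul_sum]
    have h2 : ∑ x : Fin t, (d+1) * (c x).size = ∑ x : Fin t, d * (c x).size + ∑ x : Fin t, (c x).size := by
      rw [← Finset.sum_add_distrib]
      exact Finset.sum_congr rfl fun i _ => by ring
    rw [h2, mul_add, mul_one, Finset.mul_sum]
    ring

def Bt (t : ℕ) : ℕ → ℕ
  | 0 => 0
  | m + 1 => t * Bt t m + (m + 1)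

lemma key (T : TAry t) : ∀ m, m * T.size ≤ T.pathLength + Bt t m := by
  induction T with
  | nil => intro m; simp [size, pathLength, plFrom]
  | node c ih =>
    intro m
    cases m with
    | zero => simp
    | succ k =>
      have hpl : (node c).pathLength = ∑ i, ((c i).pathLength + (c i).size) := by
        simp only [pathLength, plFrom]
        rw [Finset.sum_congr rfl (fun i _ => plFrom_eq (c i) (0+1))]
        simp [pathLength]
      rw [hpl]
      simp only [size, Bt]
      have h : ∑ i, (k+1) * (c i).size ≤ (∑ i, ((c i).pathLength + (c i).size)) + t * Bt t k := by
        have : t * Bt t k = ∑ _i : Fin t, Bt t k := by simp [Finset.sum_const, mul_comm]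
        rw [this, ← Finset.sum_add_distrib]
        apply Finset.sum_le_sum
        intro i _
        have := ih i k
        nlinarith [ih i k]
      calc (k+1) * (1 + ∑ i, (c i).size) = (∑ i, (k+1) * (c i).size) + (k+1) := by
            rw [mul_add, mul_one, Finset.mul_sum]
            ring
        _ ≤ ((∑ i, ((c i).pathLength + (c i).size)) + t * Bt t k) + (k+1) := by
            exact Nat.add_le_add_right h _
        _ = (∑ i, ((c i).pathLength + (c i).size)) + (t * Bt t k + (k+1)) := by ring

lemma Bt_le (ht : 2 ≤ t) : ∀ m, Bt t m ≤ m * t ^ m := by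
  intro m
  induction m with
  | zero => simp [Bt]
  | succ k ihk =>
    have h1 : k + 1 ≤ t ^ (k+1) := by
      calc k + 1 ≤ 2 ^ (k+1) := le_of_lt (k+1).lt_two_pow_self
        _ ≤ t ^ (k+1) := Nat.pow_le_pow_left ht _
    simp only [Bt]
    calc t * Bt t k + (k+1) ≤ t * (k * t ^ k) + t ^ (k+1) := by
          exact Nat.add_le_add (Nat.mul_le_mul_left t ihk) h1
      _ = (k + 1) * t ^ (k + 1) := by ring

end TAry

open Filter Real


open Filter Real

lemma aux_sub_log (C : ℝ) (hC : 0 < C) :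
    Tendsto (fun y : ℝ => y - C * Real.log y) atTop atTop := by
  have hε : (0:ℝ) < 1/(2*C) := by positivity
  have h := Real.isLittleO_log_id_atTop.def hε
  apply tendsto_atTop_mono' atTop ?_ (tendsto_id.atTop_div_const two_pos)
  filter_upwards [h, eventually_ge_atTop (0:ℝ)] with y hy hy0
  have h1 : Real.log y ≤ 1/(2*C) * y := by
    have := le_trans (le_abs_self _) hy
    simpa [Real.norm_eq_abs, abs_of_nonneg hy0] using this
  have h2 : C * Real.log y ≤ y/2 := by
    have := mul_le_mul_of_nonneg_left h1 hC.le
    rw [show C * (1/(2*C) * y) = y/2 by field_simp] at this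
    exact this
  simp only [id]
  linarith

lemma aux_event (t : ℕ) (ht : 2 ≤ t) :
    ∀ᶠ p : ℕ in atTop,
      1 ≤ Real.log p ∧ 1 ≤ Real.log (Real.log p) ∧
      1 ≤ Real.logb t p - (3/Real.log t + 1) * Real.log (Real.log p) ∧
      (t:ℝ) ≤ Real.log (Real.log p) * (Real.log t)^2 * Real.log p := by
  have htR : (1:ℝ) < t := by exact_mod_cast lt_of_lt_of_le one_lt_two ht
  have hlt : 0 < Real.log t := Real.log_pos htR
  have hlogN : Tendsto (fun p : ℕ => Real.log p) atTop atTop :=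
    Real.tendsto_log_atTop.comp tendsto_natCast_atTop_atTop
  have hlamN : Tendsto (fun p : ℕ => Real.log (Real.log p)) atTop atTop :=
    Real.tendsto_log_atTop.comp hlogN
  have hC : 0 < (3/Real.log t + 1) * Real.log t := by positivity
  have h3 : Tendsto (fun p : ℕ =>
      Real.logb t p - (3/Real.log t + 1) * Real.log (Real.log p)) atTop atTop := by
    have base := (aux_sub_log _ hC).comp hlogN
    have := base.const_mul_atTop (show (0:ℝ) < 1/Real.log t by positivity)
    refine this.congr fun p => ?_
    simp only [Function.comp]
    rw [Real.logb]
    field_simp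
  have h4 : Tendsto (fun p : ℕ =>
      Real.log (Real.log p) * (Real.log t)^2 * Real.log p) atTop atTop := by
    have := (hlamN.atTop_mul_atTop₀ hlogN).atTop_mul_const (show (0:ℝ) < (Real.log t)^2 by positivity)
    refine this.congr fun p => ?_
    ring
  filter_upwards [hlogN.eventually_ge_atTop 1, hlamN.eventually_ge_atTop 1,
    h3.eventually_ge_atTop 1, h4.eventually_ge_atTop (t:ℝ)] with p a b c d
  exact ⟨a, b, c, d⟩

lemma aux_bound (tr r lt ℓ lam : ℝ)
    (htR : 1 < tr) (hr0' : 0 ≤ r)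
    (hltd : lt = Real.log tr) (hℓd : ℓ = Real.log r) (hlamd : lam = Real.log ℓ)
    (h1 : 1 ≤ ℓ) (h2 : 1 ≤ lam)
    (h3 : 1 ≤ ℓ/lt - (3/lt + 1) * lam)
    (h4 : tr ≤ lam * lt^2 * ℓ) :
    ∃ m : ℕ, 1 ≤ m ∧ r/m + tr^m ≤ r/(ℓ/lt - (3/lt + 1) * lam) := by
  have ht0 : (0:ℝ) < tr := by linarith
  have hlt : 0 < lt := by rw [hltd]; exact Real.log_pos htR
  have hr1 : (1:ℝ) < r := by
    by_contra h
    push_neg at h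
    have : ℓ ≤ 0 := by rw [hℓd]; exact Real.log_nonpos hr0' h
    linarith
  have hr0 : (0:ℝ) < r := by linarith
  have hl0 : 0 < ℓ := by linarith
  set A := ℓ/lt - (3/lt + 1) * lam with hAdef
  have hE : ℓ/lt - (3/lt) * lam = A + lam := by rw [hAdef]; ring
  have hApos : (0:ℝ) < A := by linarith
  have hAl : (0:ℝ) < A + lam := by linarith
  have hEpos : (0:ℝ) < ℓ/lt - (3/lt) * lam := by rw [hE]; linarith
  refine ⟨⌈ℓ/lt - (3/lt) * lam⌉₊, Nat.one_le_ceil_iff.mpr hEpos, ?_⟩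
  set m : ℕ := ⌈ℓ/lt - (3/lt) * lam⌉₊ with hmdef
  have hm_lb : ℓ/lt - (3/lt) * lam ≤ (m:ℝ) := Nat.le_ceil _
  have hm_ub : (m:ℝ) ≤ ℓ/lt - (3/lt) * lam + 1 := (Nat.ceil_lt_add_one hEpos.le).le
  have hm0 : (0:ℝ) < m := lt_of_lt_of_le hEpos hm_lb
  -- step 1
  have step1 : r/m ≤ r/(A + lam) := by
    apply div_le_div_of_nonneg_left hr0.le hAl
    rw [← hE]; exact hm_lb
  -- step 2
  have step2 : tr^m ≤ r * tr / ℓ^3 := by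
    have e0 : tr^((3/lt)*lam) = ℓ^3 := by
      rw [Real.rpow_def_of_pos ht0]
      have e1 : Real.log tr * ((3/lt)*lam) = (3:ℕ) * lam := by
        rw [← hltd]; field_simp; norm_num
      rw [e1, Real.exp_nat_mul, hlamd, Real.exp_log hl0]
    have hLlog : ℓ/lt = Real.logb tr r := by rw [Real.logb, hℓd, hltd]
    calc tr^m = tr^((m:ℕ):ℝ) := (Real.rpow_natCast _ _).symm
      _ ≤ tr^(ℓ/lt - (3/lt)*lam + 1) := Real.rpow_le_rpow_of_exponent_le htR.le hm_ub
      _ = r * tr / ℓ^3 := by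
          rw [show ℓ/lt - (3/lt)*lam + 1 = (ℓ/lt + 1) - (3/lt)*lam by ring,
            Real.rpow_sub ht0, Real.rpow_add ht0, Real.rpow_one, hLlog,
            Real.rpow_logb ht0 (by linarith) hr0, e0]
  -- step 3
  have hrel : (A + lam) * lt ≤ ℓ := by
    have h5 : A + lam ≤ ℓ/lt := by
      rw [← hE]
      have : 0 ≤ (3/lt) * lam := by positivity
      linarith
    calc (A + lam) * lt ≤ (ℓ/lt) * lt := by nlinarith
      _ = ℓ := by field_simp
  have e2 : A * (A + lam) * lt^2 ≤ ℓ^2 := by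
    nlinarith [mul_self_le_mul_self (by positivity : (0:ℝ) ≤ (A+lam)*lt) hrel,
      mul_le_mul_of_nonneg_right (show A ≤ A + lam by linarith)
        (by positivity : (0:ℝ) ≤ (A+lam)*lt^2)]
  have e1 : r/A - r/(A+lam) = r*lam/(A*(A+lam)) := by
    field_simp
    ring
  have e3 : r*tr/ℓ^3 ≤ r*lam/(A*(A+lam)) := by
    rw [div_le_div_iff₀ (by positivity) (by positivity)]
    have k1 : tr * (A*(A+lam)) ≤ (lam*lt^2*ℓ) * (A*(A+lam)) :=
      mul_le_mul_of_nonneg_right h4 (by positivity)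
    have k3 : (lam*ℓ)*(A*(A+lam)*lt^2) ≤ (lam*ℓ)*ℓ^2 :=
      mul_le_mul_of_nonneg_left e2 (by positivity)
    have k4 : tr*(A*(A+lam)) ≤ lam*ℓ^3 := by
      calc tr*(A*(A+lam)) ≤ (lam*lt^2*ℓ) * (A*(A+lam)) := k1
        _ = (lam*ℓ)*(A*(A+lam)*lt^2) := by ring
        _ ≤ (lam*ℓ)*ℓ^2 := k3
        _ = lam*ℓ^3 := by ring
    calc r*tr*(A*(A+lam)) = r*(tr*(A*(A+lam))) := by ring
      _ ≤ r*(lam*ℓ^3) := mul_le_mul_of_nonneg_left k4 hr0.le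
      _ = r*lam*ℓ^3 := by ring
  linarith

/-- Any `t`-ary tree with path length `p` has at most `p / (log_t p - c log log p)` nodes
for large `p`; in particular at most `(p / log_t p)(1 + o(1))` nodes as `p → ∞`. -/
theorem stmt10 (t : ℕ) (ht : 2 ≤ t) :
    (∃ c : ℝ, ∃ P₀ : ℕ, ∀ p : ℕ, P₀ ≤ p → ∀ T : TAry t, T.pathLength = p →
      (T.size : ℝ) ≤ (p : ℝ) / (Real.logb t p - c * Real.log (Real.log p))) ∧
    (∃ f : ℕ → ℝ, Filter.Tendsto f Filter.atTop (nhds 0) ∧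
      ∀ p : ℕ, 2 ≤ p → ∀ T : TAry t, T.pathLength = p →
        (T.size : ℝ) ≤ ((p : ℝ) / Real.logb t p) * (1 + f p)) := by
  have htR : (1:ℝ) < t := by exact_mod_cast lt_of_lt_of_le one_lt_two ht
  have hlt : 0 < Real.log t := Real.log_pos htR
  obtain ⟨P₀, hP₀⟩ := (Filter.eventually_atTop).mp (aux_event t ht)
  have part1 : ∀ p : ℕ, P₀ ≤ p → ∀ T : TAry t, T.pathLength = p →
      (T.size : ℝ) ≤ (p : ℝ) / (Real.logb t p - (3/Real.log t + 1) * Real.log (Real.log p)) := by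
    intro p hp T hT
    obtain ⟨h1, h2, h3, h4⟩ := hP₀ p hp
    have hlb : Real.logb t p = Real.log p / Real.log t := (Real.log_div_log).symm
    rw [hlb] at h3 ⊢
    obtain ⟨m, hm1, hm⟩ := aux_bound (t:ℝ) (p:ℝ) (Real.log t) (Real.log p)
      (Real.log (Real.log p)) htR (by positivity) rfl rfl rfl h1 h2 h3 h4
    have hkey : m * T.size ≤ p + m * t^m := by
      have hk := TAry.key T m
      rw [hT] at hk
      exact le_trans hk (Nat.add_le_add_left (TAry.Bt_le ht m) p)
    have hkeyR : (m:ℝ) * T.size ≤ (p:ℝ) + (m:ℝ) * (t:ℝ)^m := by exact_mod_cast hkey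
    have hm0R : (0:ℝ) < m := by exact_mod_cast hm1
    have hsize : (T.size:ℝ) ≤ (p:ℝ)/m + (t:ℝ)^m := by
      rw [show (p:ℝ)/m + (t:ℝ)^m = ((p:ℝ) + (m:ℝ)*(t:ℝ)^m)/m by field_simp,
        le_div_iff₀ hm0R]
      linarith [hkeyR]
    exact le_trans hsize hm
  refine ⟨⟨3/Real.log t + 1, P₀, part1⟩, ?_⟩
  classical
  set cst : ℝ := 3/Real.log t + 1 with hcst
  have hcst0 : 0 < cst := by rw [hcst]; positivity
  refine ⟨fun p => if P₀ ≤ p then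
      cst * Real.log (Real.log p) / (Real.logb t p - cst * Real.log (Real.log p))
    else 2 * Real.logb t p, ?_, ?_⟩
  · -- tendsto 0
    have hlogN : Tendsto (fun p : ℕ => Real.log p) atTop atTop :=
      Real.tendsto_log_atTop.comp tendsto_natCast_atTop_atTop
    have hupper : Tendsto (fun p : ℕ =>
        (2*Real.log t*cst) * (Real.log (Real.log p)/Real.log p)) atTop (nhds 0) := by
      have h0 : Tendsto (fun y : ℝ => Real.log y / y) atTop (nhds 0) :=
        Real.isLittleO_log_id_atTop.tendsto_div_nhds_zero
      have h1 := (h0.comp hlogN).const_mul (2*Real.log t*cst)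
      simpa using h1
    have hev : ∀ᶠ p : ℕ in atTop,
        (2*Real.log t*cst) * Real.log (Real.log p) ≤ Real.log p := by
      have hε : (0:ℝ) < 1/(2*Real.log t*cst) := by positivity
      have h := Real.isLittleO_log_id_atTop.def hε
      filter_upwards [hlogN.eventually (h.and (eventually_ge_atTop (0:ℝ)))] with p hp
      obtain ⟨hp1, hp2⟩ := hp
      have h5 : Real.log (Real.log p) ≤ 1/(2*Real.log t*cst) * Real.log p := by
        have := le_trans (le_abs_self _) hp1
        simpa [Real.norm_eq_abs, abs_of_nonneg hp2] using this
      have h6 := mul_le_mul_of_nonneg_left h5 (by positivity : (0:ℝ) ≤ 2*Real.log t*cst)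
      rw [show (2*Real.log t*cst) * (1/(2*Real.log t*cst) * Real.log p) = Real.log p by
        field_simp] at h6
      exact h6
    have hg : Tendsto (fun p : ℕ =>
        cst * Real.log (Real.log p) / (Real.logb t p - cst * Real.log (Real.log p)))
        atTop (nhds 0) := by
      apply tendsto_of_tendsto_of_tendsto_of_le_of_le' tendsto_const_nhds hupper
      · filter_upwards [aux_event t ht] with p hcond
        obtain ⟨h1, h2, h3, h4⟩ := hcond
        have hA : (1:ℝ) ≤ Real.logb t p - cst * Real.log (Real.log p) := by rw [hcst]; exact h3
        have hnum : (0:ℝ) ≤ cst * Real.log (Real.log p) :=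
          mul_nonneg hcst0.le (by linarith)
        positivity
      · filter_upwards [aux_event t ht, hev] with p hcond h5
        obtain ⟨h1, h2, h3, h4⟩ := hcond
        have hlb : Real.logb t p = Real.log p / Real.log t := (Real.log_div_log).symm
        have hA : (1:ℝ) ≤ Real.logb t p - cst * Real.log (Real.log p) := by rw [hcst]; exact h3
        have hl0 : (0:ℝ) < Real.log p := by linarith
        have hq : cst * Real.log (Real.log p) ≤ Real.log p/(2*Real.log t) := by
          rw [le_div_iff₀ (by positivity)]
          nlinarith [h5]
        have he : Real.log p/Real.log t - Real.log p/(2*Real.log t)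
            = Real.log p/(2*Real.log t) := by field_simp; ring
        have hAge : Real.log p/(2*Real.log t) ≤ Real.logb t p - cst * Real.log (Real.log p) := by
          rw [hlb]; linarith
        have hnum : (0:ℝ) ≤ cst * Real.log (Real.log p) :=
          mul_nonneg hcst0.le (by linarith)
        have hd := div_le_div_of_nonneg_left hnum (by positivity :
          (0:ℝ) < Real.log p/(2*Real.log t)) hAge
        have he2 : cst * Real.log (Real.log p) / (Real.log p/(2*Real.log t))
            = (2*Real.log t*cst) * (Real.log (Real.log p)/Real.log p) := by
          field_simp
        linarith [hd, he2.le, he2.ge]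
    apply hg.congr'
    filter_upwards [eventually_ge_atTop P₀] with p hp
    rw [if_pos hp]
  · intro p hp2 T hT
    have hp1R : (1:ℝ) < p := by exact_mod_cast lt_of_lt_of_le one_lt_two hp2
    have hL : 0 < Real.logb t p := Real.logb_pos htR hp1R
    beta_reduce
    by_cases hp : P₀ ≤ p
    · have hb := part1 p hp T hT
      obtain ⟨h1, h2, h3, h4⟩ := hP₀ p hp
      rw [if_pos hp]
      have hA : (1:ℝ) ≤ Real.logb t p - cst * Real.log (Real.log p) := by rw [hcst]; exact h3
      have hid : ((p:ℝ)/Real.logb t p) * (1 + cst * Real.log (Real.log p) /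
          (Real.logb t p - cst * Real.log (Real.log p)))
          = (p:ℝ)/(Real.logb t p - cst * Real.log (Real.log p)) := by
        field_simp
        ring
      rw [hid]
      exact hb
    · rw [if_neg hp]
      have hn : T.size ≤ p + 1 := by
        have hk := TAry.key T 1
        rw [hT] at hk
        simpa [TAry.Bt] using hk
      have hnR : (T.size:ℝ) ≤ (p:ℝ) + 1 := by exact_mod_cast hn
      have hp2R : (2:ℝ) ≤ p := by exact_mod_cast hp2
      have hid : ((p:ℝ)/Real.logb t p) * (1 + 2*Real.logb t p)
          = (p:ℝ)/Real.logb t p + 2*(p:ℝ) := by field_simp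
      rw [hid]
      have hpos : 0 < (p:ℝ)/Real.logb t p := by positivity
      linarith
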